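/- Let $X_1,\ldots,X_n$ be i.i.d. $N(\mu,\sigma^2)$ random variables with $n \geq 3$, and let $b \in \mathbb{R}^n$ satisfy $\sum_{i=1}^n b_i = 0$ and $\sum_{i=1}^n b_i^2 = 1$. Then the Studentized contrast $V := (\sum_{i=1}^n b_i X_i) / \sqrt{\frac{1}{n-1}\sum_{i=1}^n (X_i - \overline{X})^2}$ has the same distribution as $(\sum_{i=1}^{n-1} Z_i)/\sqrt{\sum_{i=1}^{n-1} Z_i^2}$, where $Z_1,\ldots,Z_{n-1}$ are i.i.d. standard normal random variables. In particular, the distribution of $V$ does not depend on $\mu$, $\sigma$, or the particular contrast vector $b$. -/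

import Mathlib

open MeasureTheory ProbabilityTheory Finset
open scoped NNReal ENNReal

open scoped RealInnerProductSpace

section Auxiliary


lemma lintegral_pi_prod' : ∀ (m : ℕ) (μ : Fin m → Measure ℝ), (∀ i, SigmaFinite (μ i)) →
    ∀ (f : Fin m → ℝ → ℝ≥0∞), (∀ i, Measurable (f i)) →
    ∫⁻ x, ∏ i, f i (x i) ∂Measure.pi μ = ∏ i, ∫⁻ t, f i t ∂μ i := by
  intro m
  induction m with
  | zero =>
      intro μ _ f _
      simp [Measure.pi_of_empty (α := Fin 0) (β := fun _ => ℝ) μ]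
  | succ m ih =>
      intro μ hμ f hf
      haveI := hμ
      have hmp := MeasureTheory.measurePreserving_piFinSuccAbove μ 0
      set g2 : (Fin m → ℝ) → ℝ≥0∞ := fun z => ∏ j, f (Fin.succAbove 0 j) (z j) with hg2
      have hg2m : Measurable g2 :=
        Finset.measurable_prod _ fun j _ => (hf _).comp (measurable_pi_apply j)
      set g : ℝ × (Fin m → ℝ) → ℝ≥0∞ := fun p => f 0 p.1 * g2 p.2 with hg
      have hgm : Measurable g := ((hf 0).comp measurable_fst).mul (hg2m.comp measurable_snd)
      have heq : ∀ x : Fin (m+1) → ℝ,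
          ∏ i, f i (x i) = g (MeasurableEquiv.piFinSuccAbove (fun _ => ℝ) 0 x) := by
        intro x
        simp only [hg, hg2, MeasurableEquiv.piFinSuccAbove_apply, Fin.insertNthEquiv,
          Equiv.coe_fn_symm_mk, Fin.removeNth]
        rw [Fin.prod_univ_succAbove (fun i => f i (x i)) 0]
      calc ∫⁻ x, ∏ i, f i (x i) ∂Measure.pi μ
          = ∫⁻ x, g (MeasurableEquiv.piFinSuccAbove (fun _ => ℝ) 0 x) ∂Measure.pi μ :=
            lintegral_congr heq
        _ = ∫⁻ p, g p ∂(μ 0).prod (Measure.pi fun j => μ (Fin.succAbove 0 j)) :=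
            hmp.lintegral_comp hgm
        _ = (∫⁻ t, f 0 t ∂μ 0) * ∫⁻ z, g2 z ∂(Measure.pi fun j => μ (Fin.succAbove 0 j)) :=
            MeasureTheory.lintegral_prod_mul (hf 0).aemeasurable hg2m.aemeasurable
        _ = (∫⁻ t, f 0 t ∂μ 0) * ∏ j, ∫⁻ t, f (Fin.succAbove 0 j) t ∂μ (Fin.succAbove 0 j) := by
            rw [hg2, ih _ (fun j => hμ _) _ (fun j => hf _)]
        _ = ∏ i, ∫⁻ t, f i t ∂μ i := (Fin.prod_univ_succAbove (fun i => ∫⁻ t, f i t ∂μ i) 0).symm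

noncomputable def stdGpi (m : ℕ) : Measure (Fin m → ℝ) :=
  Measure.pi (fun _ => gaussianReal 0 1)

instance (m : ℕ) : IsProbabilityMeasure (stdGpi m) := by
  unfold stdGpi; infer_instance

lemma stdGpi_eq (m : ℕ) : stdGpi m =
    (volume : Measure (Fin m → ℝ)).withDensity (fun x => ∏ i, gaussianPDF 0 1 (x i)) := by
  rw [stdGpi]
  refine Measure.pi_eq fun s hs => ?_
  rw [withDensity_apply _ (MeasurableSet.univ_pi hs),
    ← lintegral_indicator (MeasurableSet.univ_pi hs)]
  have h1 : ∀ x : Fin m → ℝ,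
      (Set.pi Set.univ s).indicator (fun x => ∏ i, gaussianPDF 0 1 (x i)) x
        = ∏ i, (s i).indicator (gaussianPDF 0 1) (x i) := by
    intro x
    by_cases hx : x ∈ Set.pi Set.univ s
    · rw [Set.indicator_of_mem hx]
      exact Finset.prod_congr rfl fun i _ =>
        (Set.indicator_of_mem (hx i (Set.mem_univ i)) _).symm
    · rw [Set.indicator_of_notMem hx]
      have : ∃ i, x i ∉ s i := by
        by_contra h
        push_neg at h
        exact hx (fun i _ => h i)
      obtain ⟨i, hi⟩ := this
      exact (Finset.prod_eq_zero (Finset.mem_univ i) (Set.indicator_of_notMem hi _)).symm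
  rw [lintegral_congr h1, MeasureTheory.volume_pi,
    lintegral_pi_prod' m _ (fun _ => inferInstance) _
      (fun i => (measurable_gaussianPDF 0 1).indicator (hs i))]
  refine Finset.prod_congr rfl fun i _ => ?_
  rw [lintegral_indicator (hs i), gaussianReal_apply 0 one_ne_zero (s i)]

lemma MeasurableEquiv.map_withDensity' {α β : Type*} [MeasurableSpace α] [MeasurableSpace β]
    (Φ : α ≃ᵐ β) (μ : Measure α) (g : α → ℝ≥0∞) (hg : Measurable g) :
    Measure.map Φ (μ.withDensity g) = (Measure.map Φ μ).withDensity (fun y => g (Φ.symm y)) := by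
  ext s hs
  have h := setLIntegral_map (μ := μ) hs (hg.comp Φ.symm.measurable) Φ.measurable
  simp only [Function.comp, Φ.symm_apply_apply] at h
  rw [Measure.map_apply Φ.measurable hs, withDensity_apply _ (Φ.measurable hs),
    withDensity_apply _ hs, h]

lemma prod_gaussianPDF_eq (m : ℕ) (z : EuclideanSpace ℝ (Fin m)) :
    ∏ i, gaussianPDF 0 1 (z i) =
      ENNReal.ofReal ((Real.sqrt (2 * Real.pi))⁻¹ ^ m * Real.exp (-(‖z‖ ^ 2) / 2)) := by
  have hpdf : ∀ t : ℝ, gaussianPDFReal 0 1 t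
      = (Real.sqrt (2 * Real.pi))⁻¹ * Real.exp (-(t ^ 2) / 2) := by
    intro t
    simp [gaussianPDFReal]
  have hnorm : ‖z‖ ^ 2 = ∑ i, (z i) ^ 2 := by
    rw [EuclideanSpace.norm_eq, Real.sq_sqrt (Finset.sum_nonneg fun i _ => sq_nonneg _)]
    simp [Real.norm_eq_abs, sq_abs]
  rw [hnorm]
  simp only [gaussianPDF_def, hpdf]
  rw [← ENNReal.ofReal_prod_of_nonneg (fun i _ => by positivity)]
  congr 1
  rw [Finset.prod_mul_distrib, Finset.prod_const, ← Real.exp_sum]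
  congr 1
  · simp [Finset.card_univ]
  · rw [neg_div, ← Finset.sum_div]
    simp [neg_div]

noncomputable def rotEquiv {m : ℕ}
    (e : EuclideanSpace ℝ (Fin m) ≃ₗᵢ[ℝ] EuclideanSpace ℝ (Fin m)) :
    (Fin m → ℝ) ≃ᵐ (Fin m → ℝ) :=
  (MeasurableEquiv.toLp 2 (Fin m → ℝ)).symm.symm.trans
    ((e.toHomeomorph.toMeasurableEquiv).trans (MeasurableEquiv.toLp 2 (Fin m → ℝ)).symm)

lemma rotEquiv_symm_apply {m : ℕ} (e : EuclideanSpace ℝ (Fin m) ≃ₗᵢ[ℝ] EuclideanSpace ℝ (Fin m))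
    (x : Fin m → ℝ) (i : Fin m) :
    (rotEquiv e).symm x i = e.symm ((MeasurableEquiv.toLp 2 (Fin m → ℝ)).symm.symm x) i := rfl

lemma stdGpi_map_rot {m : ℕ} (e : EuclideanSpace ℝ (Fin m) ≃ₗᵢ[ℝ] EuclideanSpace ℝ (Fin m)) :
    Measure.map (rotEquiv e) (stdGpi m) = stdGpi m := by
  have hgm : Measurable (fun x : Fin m → ℝ => ∏ i, gaussianPDF 0 1 (x i)) :=
    Finset.measurable_prod _ fun i _ => (measurable_gaussianPDF 0 1).comp (measurable_pi_apply i)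
  rw [stdGpi_eq, MeasurableEquiv.map_withDensity' _ _ _ hgm]
  have hvol : Measure.map (rotEquiv e) (volume : Measure (Fin m → ℝ)) = volume := by
    have h1 : MeasurePreserving (rotEquiv e) volume volume :=
      ((EuclideanSpace.volume_preserving_symm_measurableEquiv_toLp (Fin m)).comp
        (e.measurePreserving.comp
          (EuclideanSpace.volume_preserving_symm_measurableEquiv_toLp (Fin m)).symm))
    exact h1.map_eq
  rw [hvol]
  have hdens : (fun y : Fin m → ℝ => ∏ i, gaussianPDF 0 1 ((rotEquiv e).symm y i))
      = fun y => ∏ i, gaussianPDF 0 1 (y i) := by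
    funext y
    have h1 : ∀ i, (rotEquiv e).symm y i
        = e.symm ((MeasurableEquiv.toLp 2 (Fin m → ℝ)).symm.symm y) i :=
      rotEquiv_symm_apply e y
    calc ∏ i, gaussianPDF 0 1 ((rotEquiv e).symm y i)
        = ∏ i, gaussianPDF 0 1 ((e.symm ((MeasurableEquiv.toLp 2 (Fin m → ℝ)).symm.symm y)) i) :=
          Finset.prod_congr rfl fun i _ => by rw [h1 i]
      _ = ENNReal.ofReal ((Real.sqrt (2 * Real.pi))⁻¹ ^ m *
            Real.exp (-(‖e.symm ((MeasurableEquiv.toLp 2 (Fin m → ℝ)).symm.symm y)‖ ^ 2) / 2)) :=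
          prod_gaussianPDF_eq m _
      _ = ENNReal.ofReal ((Real.sqrt (2 * Real.pi))⁻¹ ^ m *
            Real.exp (-(‖(MeasurableEquiv.toLp 2 (Fin m → ℝ)).symm.symm y‖ ^ 2) / 2)) := by
          rw [e.symm.norm_map]
      _ = ∏ i, gaussianPDF 0 1 (((MeasurableEquiv.toLp 2 (Fin m → ℝ)).symm.symm y) i) :=
          (prod_gaussianPDF_eq m _).symm
      _ = ∏ i, gaussianPDF 0 1 (y i) := rfl
  rw [hdens, ← stdGpi_eq]

lemma joint_law {Ω : Type*} [MeasureSpace Ω] [IsProbabilityMeasure (ℙ : Measure Ω)]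
    {m : ℕ} (Y : Fin m → Ω → ℝ) (hmeas : ∀ i, Measurable (Y i))
    (hind : iIndepFun Y ℙ)
    (hlaw : ∀ i, Measure.map (Y i) ℙ = gaussianReal 0 1) :
    Measure.map (fun ω i => Y i ω) ℙ = stdGpi m := by
  rw [stdGpi]
  have hJ : Measurable (fun ω i => Y i ω) := measurable_pi_iff.mpr hmeas
  refine (Measure.pi_eq fun s hs => ?_).symm
  rw [Measure.map_apply hJ (MeasurableSet.univ_pi hs)]
  have hpre : (fun ω i => Y i ω) ⁻¹' Set.pi Set.univ s = ⋂ i ∈ Finset.univ, Y i ⁻¹' s i := by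
    ext ω
    simp [Set.mem_pi]
  rw [hpre, hind.measure_inter_preimage_eq_mul Finset.univ (fun i _ => hs i)]
  exact Finset.prod_congr rfl fun i _ => by
    rw [← hlaw i, Measure.map_apply (hmeas i) (hs i)]

lemma stdGpi_proj (m : ℕ) :
    Measure.map (fun y : Fin (m + 1) → ℝ => y ∘ Fin.succ) (stdGpi (m + 1)) = stdGpi m := by
  have hmp := MeasureTheory.measurePreserving_piFinSuccAbove
    (fun _ : Fin (m+1) => gaussianReal 0 1) 0
  have hcomp : (fun y : Fin (m + 1) → ℝ => y ∘ Fin.succ)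
      = Prod.snd ∘ (MeasurableEquiv.piFinSuccAbove (fun _ => ℝ) 0) := by
    funext y
    simp only [Function.comp_apply, MeasurableEquiv.piFinSuccAbove_apply]
    funext j
    simp [Fin.insertNthEquiv, Fin.removeNth, Fin.succAbove, Fin.zero_succAbove, Fin.tail]
  rw [hcomp, ← Measure.map_map measurable_snd
    (MeasurableEquiv.piFinSuccAbove (fun _ : Fin (m+1) => ℝ) 0).measurable]
  rw [show Measure.map (⇑(MeasurableEquiv.piFinSuccAbove (fun _ : Fin (m+1) => ℝ) 0)) (stdGpi (m+1))
      = (gaussianReal 0 1).prod (Measure.pi fun _ => gaussianReal 0 1) from hmp.map_eq]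
  rw [Measure.map_snd_prod]
  simp [stdGpi]

lemma exists_basis_two {M : ℕ} (u v : EuclideanSpace ℝ (Fin (M + 2)))
    (hu : ⟪u, u⟫ = 1) (hv : ⟪v, v⟫ = 1) (huv : ⟪u, v⟫ = 0) :
    ∃ B : OrthonormalBasis (Fin (M + 2)) ℝ (EuclideanSpace ℝ (Fin (M + 2))),
      B 0 = u ∧ B 1 = v := by
  have h01 : (0 : Fin (M + 2)) ≠ 1 := by
    simp [Fin.ext_iff]
  set w : Fin (M + 2) → EuclideanSpace ℝ (Fin (M + 2)) := fun i => if i = 0 then u else v with hw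
  have horth : Orthonormal ℝ (({0, 1} : Set (Fin (M + 2))).restrict w) := by
    rw [orthonormal_iff_ite]
    rintro ⟨i, hi⟩ ⟨j, hj⟩
    simp only [Set.mem_insert_iff, Set.mem_singleton_iff] at hi hj
    rcases hi with rfl | rfl <;> rcases hj with rfl | rfl
    · simpa [hw, Set.restrict, Set.restrict_apply, Subtype.ext_iff] using hu
    · simpa [hw, Set.restrict, Set.restrict_apply, Subtype.ext_iff, h01, h01.symm] using huv
    · simpa [hw, Set.restrict, Set.restrict_apply, Subtype.ext_iff, h01, h01.symm] using ((real_inner_comm u v).trans huv)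
    · simpa [hw, Set.restrict, Set.restrict_apply, Subtype.ext_iff, h01.symm] using hv
  obtain ⟨B, hB⟩ := horth.exists_orthonormalBasis_extension_of_card_eq
    (𝕜 := ℝ) (by simp [finrank_euclideanSpace])
  refine ⟨B, ?_, ?_⟩
  · simpa [hw] using hB 0 (by simp)
  · have := hB 1 (by simp)
    simpa [hw, h01.symm] using this

lemma exists_basis_one {M : ℕ} (u : EuclideanSpace ℝ (Fin (M + 2))) (hu : ⟪u, u⟫ = 1) :
    ∃ B : OrthonormalBasis (Fin (M + 2)) ℝ (EuclideanSpace ℝ (Fin (M + 2))), B 0 = u := by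
  have horth : Orthonormal ℝ (({0} : Set (Fin (M + 2))).restrict (fun _ => u)) := by
    rw [orthonormal_iff_ite]
    rintro ⟨i, hi⟩ ⟨j, hj⟩
    simp only [Set.mem_singleton_iff] at hi hj
    subst hi; subst hj
    simpa [Set.restrict, Set.restrict_apply, Subtype.ext_iff] using hu
  obtain ⟨B, hB⟩ := horth.exists_orthonormalBasis_extension_of_card_eq
    (𝕜 := ℝ) (by simp [finrank_euclideanSpace])
  exact ⟨B, by simpa using hB 0 (by simp)⟩

lemma sum_sq_eq_norm {k : ℕ} (z : EuclideanSpace ℝ (Fin k)) :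
    ∑ i, (z i) ^ 2 = ‖z‖ ^ 2 := by
  rw [EuclideanSpace.norm_eq, Real.sq_sqrt (Finset.sum_nonneg fun i _ => sq_nonneg _)]
  simp [Real.norm_eq_abs, sq_abs]

lemma sum_sq_dev {k : ℕ} (hk : 0 < k) (z : Fin k → ℝ) :
    ∑ i, (z i - (1 / (k : ℝ)) * ∑ j, z j) ^ 2
      = (∑ i, (z i) ^ 2) - (1 / (k : ℝ)) * (∑ j, z j) ^ 2 := by
  have hk' : (k : ℝ) ≠ 0 := by positivity
  set S := ∑ j, z j with hS
  have h1 : ∀ i : Fin k, (z i - (1 / (k : ℝ)) * S) ^ 2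
      = (z i) ^ 2 - (2 / (k : ℝ)) * S * z i + ((1 / (k : ℝ)) * S) ^ 2 := fun i => by ring
  rw [Finset.sum_congr rfl fun i _ => h1 i]
  rw [Finset.sum_add_distrib, Finset.sum_sub_distrib, ← Finset.mul_sum, ← hS,
    Finset.sum_const, Finset.card_univ]
  simp only [Fintype.card_fin, nsmul_eq_mul]
  field_simp
  ring

lemma map_K_rot (M : ℕ) :
    Measure.map (fun z : Fin (M + 2) → ℝ => (∑ i, z i) / Real.sqrt (∑ i, (z i) ^ 2))
        (stdGpi (M + 2))
      = Measure.map (fun z : Fin (M + 2) → ℝ =>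
          Real.sqrt ((M : ℝ) + 2) * z 0 / Real.sqrt (∑ i, (z i) ^ 2)) (stdGpi (M + 2)) := by
  set N : ℝ := (M : ℝ) + 2 with hN
  have hNpos : 0 < N := by positivity
  have hsN : Real.sqrt N ≠ 0 := by positivity
  set u : EuclideanSpace ℝ (Fin (M + 2)) :=
    (WithLp.equiv 2 _).symm (fun _ => (Real.sqrt N)⁻¹) with hu_def
  have hui : ∀ i, u i = (Real.sqrt N)⁻¹ := fun i => rfl
  have huu : ⟪u, u⟫ = 1 := by
    simp only [PiLp.inner_apply, RCLike.inner_apply, conj_trivial, hui]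
    rw [Finset.sum_const, Finset.card_univ]
    simp only [Fintype.card_fin, nsmul_eq_mul]
    rw [← Real.sqrt_mul_self hNpos.le]
    push_cast
    field_simp
    rw [Real.sqrt_sq hNpos.le, Real.sq_sqrt hNpos.le]
  obtain ⟨B, hB0⟩ := exists_basis_one u huu
  set e := B.repr.symm with he
  set K : (Fin (M + 2) → ℝ) → ℝ :=
    fun z => (∑ i, z i) / Real.sqrt (∑ i, (z i) ^ 2) with hK
  have hKmeas : Measurable K := by
    apply Measurable.div
    · exact Finset.measurable_sum _ fun i _ => measurable_pi_apply i
    · exact Real.continuous_sqrt.measurable.comp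
        (Finset.measurable_sum _ fun i _ => (measurable_pi_apply i).pow_const 2)
  have hcomp : ∀ y : Fin (M + 2) → ℝ, K (rotEquiv e y)
      = Real.sqrt N * y 0 / Real.sqrt (∑ i, (y i) ^ 2) := by
    intro y
    set y' : EuclideanSpace ℝ (Fin (M + 2)) :=
      (MeasurableEquiv.toLp 2 (Fin (M + 2) → ℝ)).symm.symm y with hy'
    set x : EuclideanSpace ℝ (Fin (M + 2)) := e y' with hx
    have hcoord : ∀ i, rotEquiv e y i = x i := fun i => rfl
    have hrepr : B.repr x = y' := by
      rw [hx, he]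
      exact B.repr.apply_symm_apply y'
    have hy'i : ∀ i, y' i = y i := fun i => rfl
    have h1 : ⟪u, x⟫ = y 0 := by
      rw [← hB0, ← OrthonormalBasis.repr_apply_apply, hrepr, hy'i]
    have h2 : ⟪u, x⟫ = (Real.sqrt N)⁻¹ * ∑ i, x i := by
      simp only [PiLp.inner_apply, RCLike.inner_apply, conj_trivial, hui]
      rw [Finset.mul_sum]
      exact Finset.sum_congr rfl fun i _ => mul_comm _ _
    have hsum : ∑ i, x i = Real.sqrt N * y 0 := by
      rw [← h1, h2]
      field_simp
    have hsq : ∑ i, (x i) ^ 2 = ∑ i, (y i) ^ 2 := by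
      rw [sum_sq_eq_norm x, hx, e.norm_map, ← sum_sq_eq_norm y']
      exact Finset.sum_congr rfl fun i _ => by rw [hy'i]
    have hs1 : (∑ i, rotEquiv e y i) = ∑ i, x i := Finset.sum_congr rfl fun i _ => hcoord i
    have hs2 : (∑ i, (rotEquiv e y i) ^ 2) = ∑ i, (x i) ^ 2 :=
      Finset.sum_congr rfl fun i _ => by rw [hcoord i]
    simp only [hK]
    rw [hs1, hs2, hsum, hsq]
  calc Measure.map K (stdGpi (M + 2))
      = Measure.map K (Measure.map (rotEquiv e) (stdGpi (M + 2))) := by rw [stdGpi_map_rot]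
    _ = Measure.map (K ∘ rotEquiv e) (stdGpi (M + 2)) :=
        Measure.map_map hKmeas (rotEquiv e).measurable
    _ = _ := by
        congr 1
        funext y
        exact hcomp y

lemma map_F_rot (M : ℕ) (b : Fin (M + 3) → ℝ) (hb0 : ∑ i, b i = 0) (hb1 : ∑ i, b i ^ 2 = 1) :
    Measure.map (fun z : Fin (M + 3) → ℝ => (∑ i, b i * z i) /
        Real.sqrt ((1 / ((M : ℝ) + 2)) * ∑ i, (z i - (1 / ((M : ℝ) + 3)) * ∑ j, z j) ^ 2))
      (stdGpi (M + 3))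
      = Measure.map (fun z : Fin (M + 2) → ℝ =>
          Real.sqrt ((M : ℝ) + 2) * z 0 / Real.sqrt (∑ i, (z i) ^ 2)) (stdGpi (M + 2)) := by
  set N : ℝ := (M : ℝ) + 3 with hN
  have hNpos : 0 < N := by positivity
  have hsN : Real.sqrt N ≠ 0 := by positivity
  set u : EuclideanSpace ℝ (Fin (M + 3)) :=
    (WithLp.equiv 2 _).symm (fun _ => (Real.sqrt N)⁻¹) with hu_def
  set v : EuclideanSpace ℝ (Fin (M + 3)) := (WithLp.equiv 2 _).symm b with hv_def
  have hui : ∀ i, u i = (Real.sqrt N)⁻¹ := fun i => rfl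
  have hvi : ∀ i, v i = b i := fun i => rfl
  have huu : ⟪u, u⟫ = 1 := by
    simp only [PiLp.inner_apply, RCLike.inner_apply, conj_trivial, hui]
    rw [Finset.sum_const, Finset.card_univ]
    simp only [Fintype.card_fin, nsmul_eq_mul]
    rw [← Real.sqrt_mul_self hNpos.le]
    push_cast
    field_simp
    rw [Real.sqrt_sq hNpos.le, Real.sq_sqrt hNpos.le]
  have hvv : ⟪v, v⟫ = 1 := by
    simp only [PiLp.inner_apply, RCLike.inner_apply, conj_trivial, hvi]
    rw [← hb1]
    exact Finset.sum_congr rfl fun i _ => (sq (b i)).symm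
  have huv : ⟪u, v⟫ = 0 := by
    simp only [PiLp.inner_apply, RCLike.inner_apply, conj_trivial, hui, hvi]
    rw [← Finset.sum_mul, hb0, zero_mul]
  obtain ⟨B, hB0, hB1⟩ := exists_basis_two (M := M + 1) u v huu hvv huv
  set e := B.repr.symm with he
  set F : (Fin (M + 3) → ℝ) → ℝ := fun z => (∑ i, b i * z i) /
      Real.sqrt ((1 / ((M : ℝ) + 2)) * ∑ i, (z i - (1 / ((M : ℝ) + 3)) * ∑ j, z j) ^ 2) with hF
  set H : (Fin (M + 2) → ℝ) → ℝ := fun z => z 0 /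
      Real.sqrt ((1 / ((M : ℝ) + 2)) * ∑ i, (z i) ^ 2) with hH
  have hFmeas : Measurable F := by
    apply Measurable.div
    · exact Finset.measurable_sum _ fun i _ => by fun_prop
    · refine Real.continuous_sqrt.measurable.comp (Measurable.const_mul ?_ _)
      refine Finset.measurable_sum _ fun i _ => ?_
      exact ((measurable_pi_apply i).sub
        ((Finset.measurable_sum _ fun j _ => measurable_pi_apply j).const_mul _)).pow_const 2
  have hHmeas : Measurable H := by
    apply Measurable.div
    · exact measurable_pi_apply 0
    · exact Real.continuous_sqrt.measurable.comp
        ((Finset.measurable_sum _ fun i _ => (measurable_pi_apply i).pow_const 2).const_mul _)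
  have hcomp : ∀ y : Fin (M + 3) → ℝ, F (rotEquiv e y) = H (y ∘ Fin.succ) := by
    intro y
    set y' : EuclideanSpace ℝ (Fin (M + 3)) :=
      (MeasurableEquiv.toLp 2 (Fin (M + 3) → ℝ)).symm.symm y with hy'
    set x : EuclideanSpace ℝ (Fin (M + 3)) := e y' with hx
    have hcoord : ∀ i, rotEquiv e y i = x i := fun i => rfl
    have hrepr : B.repr x = y' := by
      rw [hx, he]
      exact B.repr.apply_symm_apply y'
    have hy'i : ∀ i, y' i = y i := fun i => rfl
    have hnum : ∑ i, b i * x i = y 1 := by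
      have h1 : ⟪v, x⟫ = y 1 := by
        rw [← hB1, ← OrthonormalBasis.repr_apply_apply, hrepr, hy'i]
      rw [← h1]
      simp only [PiLp.inner_apply, RCLike.inner_apply, conj_trivial, hvi]
      exact Finset.sum_congr rfl fun i _ => mul_comm _ _
    have hsum : ∑ i, x i = Real.sqrt N * y 0 := by
      have h1 : ⟪u, x⟫ = y 0 := by
        rw [← hB0, ← OrthonormalBasis.repr_apply_apply, hrepr, hy'i]
      have h2 : ⟪u, x⟫ = (Real.sqrt N)⁻¹ * ∑ i, x i := by
        simp only [PiLp.inner_apply, RCLike.inner_apply, conj_trivial, hui]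
        rw [Finset.mul_sum]
        exact Finset.sum_congr rfl fun i _ => mul_comm _ _
      rw [← h1, h2]
      field_simp
    have hsq : ∑ i, (x i) ^ 2 = ∑ i, (y i) ^ 2 := by
      rw [sum_sq_eq_norm x, hx, e.norm_map, ← sum_sq_eq_norm y']
      exact Finset.sum_congr rfl fun i _ => by rw [hy'i]
    have hdev : ∑ i, (x i - (1 / ((M : ℝ) + 3)) * ∑ j, x j) ^ 2
        = ∑ j : Fin (M + 2), (y j.succ) ^ 2 := by
      have h3 := sum_sq_dev (k := M + 3) (by omega) (fun i => x i)
      push_cast at h3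
      rw [h3, hsq, hsum]
      rw [mul_pow, Real.sq_sqrt hNpos.le]
      have h4 : ∑ i, (y i) ^ 2 = y 0 ^ 2 + ∑ j : Fin (M + 2), (y j.succ) ^ 2 :=
        Fin.sum_univ_succ (fun i => (y i) ^ 2)
      rw [h4, ← hN]
      field_simp
      try ring
    have hs1 : (∑ i, b i * rotEquiv e y i) = ∑ i, b i * x i :=
      Finset.sum_congr rfl fun i _ => by rw [hcoord i]
    have hs2 : (∑ j, rotEquiv e y j) = ∑ j, x j := Finset.sum_congr rfl fun j _ => hcoord j
    have hs3 : ∀ c : ℝ, (∑ i, (rotEquiv e y i - c) ^ 2) = ∑ i, (x i - c) ^ 2 :=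
      fun c => Finset.sum_congr rfl fun i _ => by rw [hcoord i]
    simp only [hF, hH]
    rw [hs1, hs2, hs3, hnum, hdev]
    have : y 1 = (y ∘ Fin.succ) 0 := by
      rw [Function.comp_apply, Fin.succ_zero_eq_one]
    rw [this]
    simp [Function.comp]
  have hproj : Measurable (fun y : Fin (M + 3) → ℝ => y ∘ Fin.succ) :=
    measurable_pi_iff.mpr fun j => measurable_pi_apply _
  have step1 : Measure.map F (stdGpi (M + 3)) = Measure.map H (stdGpi (M + 2)) := by
    calc Measure.map F (stdGpi (M + 3))
        = Measure.map F (Measure.map (rotEquiv e) (stdGpi (M + 3))) := by rw [stdGpi_map_rot]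
      _ = Measure.map (F ∘ rotEquiv e) (stdGpi (M + 3)) :=
          Measure.map_map hFmeas (rotEquiv e).measurable
      _ = Measure.map (H ∘ fun y : Fin (M + 3) → ℝ => y ∘ Fin.succ) (stdGpi (M + 3)) := by
          congr 1
          funext y
          exact hcomp y
      _ = Measure.map H (Measure.map (fun y : Fin (M + 3) → ℝ => y ∘ Fin.succ)
            (stdGpi (M + 3))) := (Measure.map_map hHmeas hproj).symm
      _ = Measure.map H (stdGpi (M + 2)) := by rw [stdGpi_proj (M + 2)]
  rw [step1]
  congr 1
  funext z
  simp only [hH]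
  rw [Real.sqrt_mul (by positivity : (0:ℝ) ≤ 1 / ((M : ℝ) + 2)), one_div, Real.sqrt_inv,
    inv_mul_eq_div, div_div_eq_mul_div, mul_comm]

end Auxiliary

/-- If `X_1, …, X_n` are i.i.d. `N(μ, σ²)` with `n ≥ 3` and
`b ∈ ℝⁿ` satisfies `∑ b_i = 0` and `∑ b_i² = 1`, then the Studentized contrast
`V = (∑ b_i X_i) / √((1/(n-1)) ∑ (X_i - X̄)²)` has the same distribution as
`(∑_{i<n-1} Z_i)/√(∑_{i<n-1} Z_i²)` for i.i.d. standard normal `Z_i`; in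
particular the distribution of `V` does not depend on `μ`, `σ` or `b`. -/
theorem studentized_contrast_pivot
    {Ω : Type*} [MeasureSpace Ω] [IsProbabilityMeasure (ℙ : Measure Ω)]
    {Ω' : Type*} [MeasureSpace Ω'] [IsProbabilityMeasure (ℙ : Measure Ω')]
    (n : ℕ) (hn : 3 ≤ n) (μ : ℝ) (σ : ℝ≥0) (hσ : 0 < σ)
    (X : Fin n → Ω → ℝ) (hXmeas : ∀ i, Measurable (X i))
    (hXindep : iIndepFun X ℙ)
    (hXlaw : ∀ i, Measure.map (X i) ℙ = gaussianReal μ (σ ^ 2))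
    (Z : Fin (n - 1) → Ω' → ℝ) (hZmeas : ∀ i, Measurable (Z i))
    (hZindep : iIndepFun Z ℙ)
    (hZlaw : ∀ i, Measure.map (Z i) ℙ = gaussianReal 0 1)
    (b : Fin n → ℝ) (hb0 : ∑ i, b i = 0) (hb1 : ∑ i, b i ^ 2 = 1)
    (V : Ω → ℝ)
    (hV : ∀ ω, V ω = (∑ i, b i * X i ω) /
      Real.sqrt ((1 / (n - 1 : ℝ)) *
        ∑ i, (X i ω - (1 / (n : ℝ)) * ∑ j, X j ω) ^ 2))
    (W : Ω' → ℝ)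
    (hW : ∀ ω', W ω' = (∑ i, Z i ω') / Real.sqrt (∑ i, (Z i ω') ^ 2)) :
    Measure.map V (ℙ : Measure Ω) = Measure.map W (ℙ : Measure Ω') := by
  obtain ⟨M, rfl⟩ : ∃ M, n = M + 3 := ⟨n - 3, by omega⟩
  have hσR : ((σ : ℝ)) ≠ 0 := by positivity
  -- ### W side
  have hZjoint : Measure.map (fun ω' (i : Fin (M + 2)) => Z i ω') (ℙ : Measure Ω')
      = stdGpi (M + 2) := joint_law (m := M + 2) Z hZmeas hZindep hZlaw
  set K : (Fin (M + 2) → ℝ) → ℝ :=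
    fun z => (∑ i, z i) / Real.sqrt (∑ i, (z i) ^ 2) with hK
  have hKmeas : Measurable K := by
    apply Measurable.div
    · exact Finset.measurable_sum _ fun i _ => measurable_pi_apply i
    · exact Real.continuous_sqrt.measurable.comp
        (Finset.measurable_sum _ fun i _ => (measurable_pi_apply i).pow_const 2)
  have hJZ : Measurable (fun ω' (i : Fin (M + 2)) => Z i ω') := measurable_pi_iff.mpr hZmeas
  have hWside : Measure.map W (ℙ : Measure Ω')
      = Measure.map (fun z : Fin (M + 2) → ℝ =>
          Real.sqrt ((M : ℝ) + 2) * z 0 / Real.sqrt (∑ i, (z i) ^ 2)) (stdGpi (M + 2)) := by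
    have hWK : W = K ∘ (fun ω' (i : Fin (M + 2)) => Z i ω') := by
      funext ω'
      rw [hW ω']
      rfl
    rw [hWK, ← Measure.map_map hKmeas hJZ, hZjoint, ← map_K_rot M]
  -- ### V side
  set X' : Fin (M + 3) → Ω → ℝ := fun i ω => (σ : ℝ)⁻¹ * (X i ω + -μ) with hX'
  have hX'meas : ∀ i, Measurable (X' i) := fun i => ((hXmeas i).add_const _).const_mul _
  have hX'indep : iIndepFun X' ℙ := by
    have := hXindep.comp (fun i => fun t : ℝ => (σ : ℝ)⁻¹ * (t + -μ))
      (fun i => (measurable_id.add_const _).const_mul _)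
    exact this
  have hX'law : ∀ i, Measure.map (X' i) ℙ = gaussianReal 0 1 := by
    intro i
    have hc : Measurable (fun t : ℝ => t + -μ) := measurable_id.add_const _
    have hm : Measurable (fun t : ℝ => (σ : ℝ)⁻¹ * t) := measurable_id.const_mul _
    have hXc : X' i = ((fun t : ℝ => (σ : ℝ)⁻¹ * t) ∘ (fun t : ℝ => t + -μ)) ∘ X i := rfl
    rw [hXc, ← Measure.map_map (hm.comp hc) (hXmeas i), hXlaw i,
      ← Measure.map_map hm hc, gaussianReal_map_add_const (-μ), gaussianReal_map_const_mul]
    congr 1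
    · ring
    · ext
      simp only [NNReal.coe_mul, NNReal.coe_mk, NNReal.coe_pow, NNReal.coe_one]
      field_simp
  have hXjoint : Measure.map (fun ω (i : Fin (M + 3)) => X' i ω) (ℙ : Measure Ω)
      = stdGpi (M + 3) := joint_law (m := M + 3) X' hX'meas hX'indep hX'law
  set F : (Fin (M + 3) → ℝ) → ℝ := fun z => (∑ i, b i * z i) /
      Real.sqrt ((1 / ((M : ℝ) + 2)) * ∑ i, (z i - (1 / ((M : ℝ) + 3)) * ∑ j, z j) ^ 2) with hF
  have hFmeas : Measurable F := by
    apply Measurable.div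
    · exact Finset.measurable_sum _ fun i _ => by fun_prop
    · refine Real.continuous_sqrt.measurable.comp (Measurable.const_mul ?_ _)
      refine Finset.measurable_sum _ fun i _ => ?_
      exact ((measurable_pi_apply i).sub
        ((Finset.measurable_sum _ fun j _ => measurable_pi_apply j).const_mul _)).pow_const 2
  have hJX : Measurable (fun ω (i : Fin (M + 3)) => X' i ω) := measurable_pi_iff.mpr hX'meas
  -- pointwise identity V = F ∘ joint X'
  have hVF : V = F ∘ (fun ω (i : Fin (M + 3)) => X' i ω) := by
    funext ω
    rw [hV ω, Function.comp_apply]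
    set a : Fin (M + 3) → ℝ := fun i => X' i ω with ha
    have hXa : ∀ i, X i ω = (σ : ℝ) * a i + μ := by
      intro i
      rw [ha, hX']
      field_simp
      ring
    have hcast1 : ((M + 3 : ℕ) : ℝ) - 1 = (M : ℝ) + 2 := by push_cast; ring
    have hcast2 : ((M + 3 : ℕ) : ℝ) = (M : ℝ) + 3 := by push_cast; ring
    have hNne : (M : ℝ) + 3 ≠ 0 := by positivity
    -- numerator
    have hnum : ∑ i, b i * X i ω = (σ : ℝ) * ∑ i, b i * a i := by
      rw [Finset.sum_congr rfl fun i _ => by rw [hXa i]]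
      have : ∀ i : Fin (M + 3), b i * ((σ : ℝ) * a i + μ)
          = (σ : ℝ) * (b i * a i) + μ * b i := fun i => by ring
      rw [Finset.sum_congr rfl fun i _ => this i, Finset.sum_add_distrib,
        ← Finset.mul_sum, ← Finset.mul_sum, hb0, mul_zero, add_zero]
    -- total sum
    have hsumX : ∑ j, X j ω = (σ : ℝ) * ∑ j, a j + ((M : ℝ) + 3) * μ := by
      rw [Finset.sum_congr rfl fun j _ => by rw [hXa j], Finset.sum_add_distrib,
        ← Finset.mul_sum, Finset.sum_const, Finset.card_univ]
      simp only [Fintype.card_fin, nsmul_eq_mul]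
      push_cast
      ring
    -- deviations
    have hdev : ∀ i : Fin (M + 3), X i ω - (1 / ((M + 3 : ℕ) : ℝ)) * ∑ j, X j ω
        = (σ : ℝ) * (a i - (1 / ((M : ℝ) + 3)) * ∑ j, a j) := by
      intro i
      rw [hXa i, hsumX, hcast2]
      field_simp
      ring
    have hdevsq : ∑ i, (X i ω - (1 / ((M + 3 : ℕ) : ℝ)) * ∑ j, X j ω) ^ 2
        = (σ : ℝ) ^ 2 * ∑ i, (a i - (1 / ((M : ℝ) + 3)) * ∑ j, a j) ^ 2 := by
      rw [Finset.sum_congr rfl fun i _ => by rw [hdev i, mul_pow], ← Finset.mul_sum]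
    have hsqrt : Real.sqrt ((1 / (((M + 3 : ℕ) : ℝ) - 1)) *
          ∑ i, (X i ω - (1 / ((M + 3 : ℕ) : ℝ)) * ∑ j, X j ω) ^ 2)
        = (σ : ℝ) * Real.sqrt ((1 / ((M : ℝ) + 2)) *
          ∑ i, (a i - (1 / ((M : ℝ) + 3)) * ∑ j, a j) ^ 2) := by
      rw [hdevsq, hcast1]
      rw [show (1 / ((M : ℝ) + 2)) * ((σ : ℝ) ^ 2 * ∑ i, (a i - (1 / ((M : ℝ) + 3)) * ∑ j, a j) ^ 2)
          = (σ : ℝ) ^ 2 * ((1 / ((M : ℝ) + 2)) * ∑ i, (a i - (1 / ((M : ℝ) + 3)) * ∑ j, a j) ^ 2)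
          from by ring]
      rw [Real.sqrt_mul (sq_nonneg _), Real.sqrt_sq (by positivity : (0:ℝ) ≤ (σ : ℝ))]
    rw [hnum, hsqrt, hF]
    exact mul_div_mul_left _ _ hσR
  rw [hVF, ← Measure.map_map hFmeas hJX, hXjoint, map_F_rot M b hb0 hb1, hWside]
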